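/- Let {S_y : y ∈ Y} be a product r.c.p. of R with respect to Q. Then R is absolutely continuous with respect to the product measure P⊗Q if there exists a product r.c.p. {S_y} of R with respect to Q such that S_y ≪ P for all y ∈ Y. Conversely, if R ≪ P⊗Q and a product r.c.p. exists, then there is a product r.c.p. {S_y'} with S_y' ≪ P for all y ∈ Y. -/

import Mathlib

open MeasureTheory Set

/-- `S` is a product regular conditional probability of `R` with respect to `Q`. -/
def IsProdRCP {X Y : Type*} [MeasurableSpace X] [MeasurableSpace Y]
    (Q : Measure Y) (R : Measure (X × Y)) (S : Y → Measure X) : Prop :=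
  (∀ y, IsProbabilityMeasure (S y)) ∧
  (∀ A : Set X, MeasurableSet A → Measurable fun y => S y A) ∧
  (∀ (A : Set X) (B : Set Y), MeasurableSet A → MeasurableSet B →
    R (A ×ˢ B) = ∫⁻ y in B, S y A ∂Q)

theorem stmt2 {X Y : Type*} [MeasurableSpace X] [MeasurableSpace Y]
    (P : Measure X) (Q : Measure Y) (R : Measure (X × Y))
    [IsProbabilityMeasure P] [IsProbabilityMeasure Q] [IsProbabilityMeasure R]
    (hP : R.map Prod.fst = P) (hQ : R.map Prod.snd = Q) :
    ((∃ S : Y → Measure X, IsProdRCP Q R S ∧ ∀ y, S y ≪ P) → R ≪ P.prod Q) ∧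
    (R ≪ P.prod Q → (∃ S : Y → Measure X, IsProdRCP Q R S) →
      ∃ S' : Y → Measure X, IsProdRCP Q R S' ∧ ∀ y, S' y ≪ P) := by
  constructor
  · rintro ⟨S, ⟨h1, h2, h3⟩, hac⟩
    set κ : ProbabilityTheory.Kernel Y X :=
      ⟨S, Measure.measurable_of_measurable_coe S h2⟩ with hκ
    haveI : ProbabilityTheory.IsMarkovKernel κ := ⟨h1⟩
    have hκa : ∀ y, κ y = S y := fun y => rfl
    have hR : R = (Q.compProd κ).map Prod.swap := by
      refine ext_of_generate_finite _ generateFrom_prod.symm isPiSystem_prod ?_ ?_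
      · rintro _ ⟨A, hA, B, hB, rfl⟩
        rw [Measure.map_apply measurable_swap (hA.prod hB)]
        have hsw : Prod.swap ⁻¹' (A ×ˢ B) = B ×ˢ A := by
          ext p; simp [and_comm]
        rw [hsw, Measure.compProd_apply_prod hB hA, h3 A B hA hB]
        exact lintegral_congr fun y => by rw [hκa]
      · rw [Measure.map_apply measurable_swap MeasurableSet.univ]
        simp
    refine Measure.AbsolutelyContinuous.mk fun N hN hN0 => ?_
    have h0 : (fun y => P (Prod.mk y ⁻¹' (Prod.swap ⁻¹' N))) =ᵐ[Q] 0 := by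
      rw [← Measure.measure_prod_null (measurable_swap hN)]
      have : (Q.prod P) (Prod.swap ⁻¹' N) = (P.prod Q) N := by
        conv_rhs => rw [← Measure.prod_swap]
        rw [Measure.map_apply measurable_swap hN]
      rw [this, hN0]
    rw [hR, Measure.map_apply measurable_swap hN,
      Measure.compProd_apply (measurable_swap hN)]
    have h0' : (fun y => κ y (Prod.mk y ⁻¹' (Prod.swap ⁻¹' N))) =ᵐ[Q] 0 := by
      filter_upwards [h0] with y hy
      rw [hκa]
      exact hac y hy
    rw [lintegral_congr_ae h0']
    simp
  · intro hRPQ _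
    set f := R.rnDeriv (P.prod Q) with hfdef
    have hfm : Measurable f := Measure.measurable_rnDeriv _ _
    have hRwd : (P.prod Q).withDensity f = R := Measure.withDensity_rnDeriv_eq _ _ hRPQ
    -- key computation for R on rectangles
    have key : ∀ (A : Set X) (B : Set Y), MeasurableSet A → MeasurableSet B →
        R (A ×ˢ B) = ∫⁻ y in B, ∫⁻ x in A, f (x, y) ∂P ∂Q := by
      intro A B hA hB
      rw [← hRwd, withDensity_apply _ (hA.prod hB), ← Measure.prod_restrict,
        lintegral_prod_symm' f hfm]
    set g : Y → ENNReal := fun y => ∫⁻ x, f (x, y) ∂P with hgdef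
    have hgm : Measurable g := hfm.lintegral_prod_left'
    have hg1 : g =ᵐ[Q] fun _ => 1 := by
      refine ae_eq_of_forall_setLIntegral_eq_of_sigmaFinite hgm measurable_const
        fun B hB _ => ?_
      have h1 : ∫⁻ y in B, g y ∂Q = R (univ ×ˢ B) := by
        rw [key univ B MeasurableSet.univ hB]
        simp only [Measure.restrict_univ, hgdef]
      have h2 : R (univ ×ˢ B) = Q B := by
        rw [← hQ, Measure.map_apply measurable_snd hB]
        congr 1
        ext p; simp
      rw [h1, h2, setLIntegral_const, one_mul]
    set G : Set Y := g ⁻¹' {1} with hGdef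
    have hGm : MeasurableSet G := hgm (measurableSet_singleton 1)
    have hGc : Q Gᶜ = 0 := by
      have h : ∀ᵐ y ∂Q, y ∈ G := by
        filter_upwards [hg1] with y hy
        simpa [hGdef] using hy
      rw [ae_iff] at h
      simpa [compl_def] using h
    classical
    set S' : Y → Measure X :=
      fun y => if y ∈ G then P.withDensity (fun x => f (x, y)) else P with hS'def
    have hS'mem : ∀ y ∈ G, S' y = P.withDensity (fun x => f (x, y)) := by
      intro y hy; simp [hS'def, hy]
    have hS'nmem : ∀ y ∉ G, S' y = P := by
      intro y hy; simp [hS'def, hy]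
    refine ⟨S', ⟨?_, ?_, ?_⟩, ?_⟩
    · intro y
      by_cases hy : y ∈ G
      · rw [hS'mem y hy]
        refine ⟨?_⟩
        rw [withDensity_apply _ MeasurableSet.univ, Measure.restrict_univ]
        exact hy
      · rw [hS'nmem y hy]; infer_instance
    · intro A hA
      have : (fun y => S' y A) =
          fun y => if y ∈ G then ∫⁻ x in A, f (x, y) ∂P else P A := by
        funext y
        by_cases hy : y ∈ G
        · rw [hS'mem y hy, withDensity_apply _ hA]; simp [hy]
        · rw [hS'nmem y hy]; simp [hy]
      rw [this]
      exact Measurable.ite hGm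
        (Measurable.lintegral_prod_left' (μ := P.restrict A) hfm) measurable_const
    · intro A B hA hB
      rw [key A B hA hB]
      refine lintegral_congr_ae ?_
      have hae : ∀ᵐ y ∂(Q.restrict B), y ∈ G :=
        ae_restrict_of_ae (by simpa [ae_iff, compl_def] using hGc)
      filter_upwards [hae] with y hy
      rw [hS'mem y hy, withDensity_apply _ hA]
    · intro y
      by_cases hy : y ∈ G
      · rw [hS'mem y hy]; exact withDensity_absolutelyContinuous _ _
      · rw [hS'nmem y hy]
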